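/- Let Θ = Θ₁ × Θ₂ × Θ₃ with each Θᵢ ⊆ ℝ^{Dᵢ} open. Let g₂ : Θ₂ × ℝ^{m₂} → ℝ^{m₁}, and suppose there is a transformation T : ℝ × Θ₂ → Θ₂ with T(0, θ₂) = θ₂ for all θ₂, ε ↦ T(ε, θ₂) differentiable at ε = 0, and g₂(T(ε, θ₂), x') = g₂(θ₂, x') for all ε ∈ ℝ, θ₂ ∈ Θ₂ and x' ∈ ℝ^{m₂} (T leaves g₂ invariant). Let h : Θ₂ → ℝ be differentiable with ∇h(θ₂) = ∂_ε T(ε, θ₂)|_{ε=0} for all θ₂. Let g₁ : Θ₁ × ℝ^{m₁} → ℝⁿ and g₃ : Θ₃ × ℝ^m → ℝ^{m₂}, define the composed network g(θ, x) = g₁(θ₁, g₂(θ₂, g₃(θ₃, x))) for θ = (θ₁, θ₂, θ₃) ∈ Θ, and suppose that for given data points x₁, …, x_N ∈ ℝ^m, labels y₁, …, y_N, and a loss ℓ, the function L(θ) = (1/N) Σᵢ ℓ(g(θ, xᵢ), yᵢ) is differentiable on Θ. Then along any gradient-flow trajectory θ(t) of L, the quantity h(θ₂(t)) is constant: a conservation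 law of a sub-network obtained via an invariance of the sub-network yields a conservation law of the global network. -/

import Mathlib

/-- Block `θ₁` of a parameter vector in `ℝ^{D₁} × ℝ^{D₂} × ℝ^{D₃}` (modeled with a sum
index so that the product carries the Euclidean inner product). -/
noncomputable def par1 (D₁ D₂ D₃ : ℕ)
    (θ : EuclideanSpace ℝ (Fin D₁ ⊕ Fin D₂ ⊕ Fin D₃)) : EuclideanSpace ℝ (Fin D₁) :=
  (EuclideanSpace.equiv (Fin D₁) ℝ).symm fun i => θ (Sum.inl i)

/-- Block `θ₂`. -/
noncomputable def par2 (D₁ D₂ D₃ : ℕ)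
    (θ : EuclideanSpace ℝ (Fin D₁ ⊕ Fin D₂ ⊕ Fin D₃)) : EuclideanSpace ℝ (Fin D₂) :=
  (EuclideanSpace.equiv (Fin D₂) ℝ).symm fun i => θ (Sum.inr (Sum.inl i))

/-- Block `θ₃`. -/
noncomputable def par3 (D₁ D₂ D₃ : ℕ)
    (θ : EuclideanSpace ℝ (Fin D₁ ⊕ Fin D₂ ⊕ Fin D₃)) : EuclideanSpace ℝ (Fin D₃) :=
  (EuclideanSpace.equiv (Fin D₃) ℝ).symm fun i => θ (Sum.inr (Sum.inr i))

/-- Projection onto block 1 as a continuous linear map. -/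
noncomputable def proj1 (D₁ D₂ D₃ : ℕ) :
    EuclideanSpace ℝ (Fin D₁ ⊕ Fin D₂ ⊕ Fin D₃) →L[ℝ] EuclideanSpace ℝ (Fin D₁) :=
  LinearMap.toContinuousLinearMap
    { toFun := fun θ => (EuclideanSpace.equiv (Fin D₁) ℝ).symm fun i => θ (Sum.inl i)
      map_add' := by intro a b; ext i; simp
      map_smul' := by intro c a; ext i; simp }

/-- Projection onto block 2 as a continuous linear map. -/
noncomputable def proj2 (D₁ D₂ D₃ : ℕ) :
    EuclideanSpace ℝ (Fin D₁ ⊕ Fin D₂ ⊕ Fin D₃) →L[ℝ] EuclideanSpace ℝ (Fin D₂) :=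
  LinearMap.toContinuousLinearMap
    { toFun := fun θ => (EuclideanSpace.equiv (Fin D₂) ℝ).symm fun i => θ (Sum.inr (Sum.inl i))
      map_add' := by intro a b; ext i; simp
      map_smul' := by intro c a; ext i; simp }

/-- Projection onto block 3 as a continuous linear map. -/
noncomputable def proj3 (D₁ D₂ D₃ : ℕ) :
    EuclideanSpace ℝ (Fin D₁ ⊕ Fin D₂ ⊕ Fin D₃) →L[ℝ] EuclideanSpace ℝ (Fin D₃) :=
  LinearMap.toContinuousLinearMap
    { toFun := fun θ => (EuclideanSpace.equiv (Fin D₃) ℝ).symm fun i => θ (Sum.inr (Sum.inr i))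
      map_add' := by intro a b; ext i; simp
      map_smul' := by intro c a; ext i; simp }

/-- Zero-padded embedding of block 2 as a continuous linear map. -/
noncomputable def emb2 (D₁ D₂ D₃ : ℕ) :
    EuclideanSpace ℝ (Fin D₂) →L[ℝ] EuclideanSpace ℝ (Fin D₁ ⊕ Fin D₂ ⊕ Fin D₃) :=
  LinearMap.toContinuousLinearMap
    { toFun := fun v => WithLp.toLp 2 fun (j : Fin D₁ ⊕ Fin D₂ ⊕ Fin D₃) => (Sum.rec (fun _ => (0:ℝ)) (Sum.rec (fun i => v i) (fun _ => 0)) j : ℝ)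
      map_add' := by intro a b; ext j; rcases j with j | j | j <;> simp
      map_smul' := by intro c a; ext j; rcases j with j | j | j <;> simp }

lemma par1_eq_proj1 (D₁ D₂ D₃ : ℕ) : par1 D₁ D₂ D₃ = ⇑(proj1 D₁ D₂ D₃) := rfl
lemma par2_eq_proj2 (D₁ D₂ D₃ : ℕ) : par2 D₁ D₂ D₃ = ⇑(proj2 D₁ D₂ D₃) := rfl
lemma par3_eq_proj3 (D₁ D₂ D₃ : ℕ) : par3 D₁ D₂ D₃ = ⇑(proj3 D₁ D₂ D₃) := rfl

lemma emb2_adjoint (D₁ D₂ D₃ : ℕ) (v : EuclideanSpace ℝ (Fin D₂))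
    (w : EuclideanSpace ℝ (Fin D₁ ⊕ Fin D₂ ⊕ Fin D₃)) :
    (inner ℝ (emb2 D₁ D₂ D₃ v) w : ℝ) = inner ℝ v (proj2 D₁ D₂ D₃ w) := by
  simp [PiLp.inner_apply, RCLike.inner_apply, Fintype.sum_sum_type, emb2, proj2,
    LinearMap.coe_toContinuousLinearMap']

/-- A conservation law of a sub-network obtained via an invariance yields a conservation
law of the global network: if `T` leaves the middle sub-network `g₂` invariant, `h` has
gradient equal to the infinitesimal generator of `T`, and the global network is the
composition `g(θ, x) = g₁(θ₁, g₂(θ₂, g₃(θ₃, x)))` with differentiable empirical loss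
`L(θ) = (1/N) ∑ᵢ ℓ(g(θ, xᵢ), yᵢ)`, then `h(θ₂(t))` is constant along any gradient-flow
trajectory of `L` staying in `Θ = Θ₁ × Θ₂ × Θ₃`. -/
theorem subnetwork_invariance_gives_global_conservation_law
    (D₁ D₂ D₃ m m₁ m₂ n N : ℕ) (hN : 1 ≤ N)
    (Θ₁ : Set (EuclideanSpace ℝ (Fin D₁))) (hΘ₁ : IsOpen Θ₁)
    (Θ₂ : Set (EuclideanSpace ℝ (Fin D₂))) (hΘ₂ : IsOpen Θ₂)
    (Θ₃ : Set (EuclideanSpace ℝ (Fin D₃))) (hΘ₃ : IsOpen Θ₃)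
    (g₁ : EuclideanSpace ℝ (Fin D₁) → (Fin m₁ → ℝ) → (Fin n → ℝ))
    (g₂ : EuclideanSpace ℝ (Fin D₂) → (Fin m₂ → ℝ) → (Fin m₁ → ℝ))
    (g₃ : EuclideanSpace ℝ (Fin D₃) → (Fin m → ℝ) → (Fin m₂ → ℝ))
    (T : ℝ → EuclideanSpace ℝ (Fin D₂) → EuclideanSpace ℝ (Fin D₂))
    (hTmaps : ∀ (ε : ℝ), ∀ θ₂ ∈ Θ₂, T ε θ₂ ∈ Θ₂)
    (hT0 : ∀ θ₂ ∈ Θ₂, T 0 θ₂ = θ₂)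
    (hTinv : ∀ (ε : ℝ), ∀ θ₂ ∈ Θ₂, ∀ x' : Fin m₂ → ℝ, g₂ (T ε θ₂) x' = g₂ θ₂ x')
    (h : EuclideanSpace ℝ (Fin D₂) → ℝ) (hdiff : DifferentiableOn ℝ h Θ₂)
    (hgen : ∀ θ₂ ∈ Θ₂, HasDerivAt (fun ε => T ε θ₂) (gradient h θ₂) 0)
    (Y : Type*) (x : Fin N → Fin m → ℝ) (y : Fin N → Y)
    (ℓ : (Fin n → ℝ) → Y → ℝ)
    (L : EuclideanSpace ℝ (Fin D₁ ⊕ Fin D₂ ⊕ Fin D₃) → ℝ)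
    (hL : ∀ θ, L θ = (1 / (N : ℝ)) * ∑ i : Fin N,
      ℓ (g₁ (par1 D₁ D₂ D₃ θ) (g₂ (par2 D₁ D₂ D₃ θ) (g₃ (par3 D₁ D₂ D₃ θ) (x i)))) (y i))
    (hLdiff : DifferentiableOn ℝ L
      {θ | par1 D₁ D₂ D₃ θ ∈ Θ₁ ∧ par2 D₁ D₂ D₃ θ ∈ Θ₂ ∧ par3 D₁ D₂ D₃ θ ∈ Θ₃})
    (I : Set ℝ) (hI : Convex ℝ I)
    (θc : ℝ → EuclideanSpace ℝ (Fin D₁ ⊕ Fin D₂ ⊕ Fin D₃))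
    (hmem : ∀ t ∈ I, par1 D₁ D₂ D₃ (θc t) ∈ Θ₁ ∧ par2 D₁ D₂ D₃ (θc t) ∈ Θ₂ ∧
      par3 D₁ D₂ D₃ (θc t) ∈ Θ₃)
    (hflow : ∀ t ∈ I, HasDerivAt θc (-(gradient L (θc t))) t) :
    ∀ s ∈ I, ∀ t ∈ I, h (par2 D₁ D₂ D₃ (θc s)) = h (par2 D₁ D₂ D₃ (θc t)) := by
  have hSopen : IsOpen
      {θ : EuclideanSpace ℝ (Fin D₁ ⊕ Fin D₂ ⊕ Fin D₃) |
        par1 D₁ D₂ D₃ θ ∈ Θ₁ ∧ par2 D₁ D₂ D₃ θ ∈ Θ₂ ∧ par3 D₁ D₂ D₃ θ ∈ Θ₃} := by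
    have h1 : Continuous (par1 D₁ D₂ D₃) := by
      rw [par1_eq_proj1]; exact (proj1 D₁ D₂ D₃).continuous
    have h2 : Continuous (par2 D₁ D₂ D₃) := by
      rw [par2_eq_proj2]; exact (proj2 D₁ D₂ D₃).continuous
    have h3 : Continuous (par3 D₁ D₂ D₃) := by
      rw [par3_eq_proj3]; exact (proj3 D₁ D₂ D₃).continuous
    exact ((hΘ₁.preimage h1).inter ((hΘ₂.preimage h2).inter (hΘ₃.preimage h3)))
  -- derivative of the conserved quantity vanishes along the flow
  have key : ∀ t ∈ I, HasDerivAt (fun u => h (par2 D₁ D₂ D₃ (θc u))) 0 t := by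
    intro t ht
    set θ := θc t with hθdef
    set θ₂ := par2 D₁ D₂ D₃ θ with hθ₂def
    have hθ₂ : θ₂ ∈ Θ₂ := (hmem t ht).2.1
    have hLd : DifferentiableAt ℝ L θ :=
      hLdiff.differentiableAt (hSopen.mem_nhds (hmem t ht))
    have hLgrad : HasFDerivAt L
        ((InnerProductSpace.toDual ℝ _) (gradient L θ)) θ :=
      hLd.hasGradientAt.hasFDerivAt
    have hdh : DifferentiableAt ℝ h θ₂ :=
      hdiff.differentiableAt (hΘ₂.mem_nhds hθ₂)
    have hgradh : HasFDerivAt h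
        ((InnerProductSpace.toDual ℝ _) (gradient h θ₂)) θ₂ :=
      hdh.hasGradientAt.hasFDerivAt
    -- the invariance curve
    set c : ℝ → EuclideanSpace ℝ (Fin D₁ ⊕ Fin D₂ ⊕ Fin D₃) :=
      fun ε => (θ - emb2 D₁ D₂ D₃ θ₂) + emb2 D₁ D₂ D₃ (T ε θ₂) with hcdef
    have hc1 : ∀ ε, par1 D₁ D₂ D₃ (c ε) = par1 D₁ D₂ D₃ θ := by
      intro ε; ext i
      show (θ - emb2 D₁ D₂ D₃ θ₂ + emb2 D₁ D₂ D₃ (T ε θ₂)) (Sum.inl i) = θ (Sum.inl i)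
      simp [PiLp.add_apply, PiLp.sub_apply, emb2, LinearMap.coe_toContinuousLinearMap']
    have hc2 : ∀ ε, par2 D₁ D₂ D₃ (c ε) = T ε θ₂ := by
      intro ε; ext i
      show (θ - emb2 D₁ D₂ D₃ θ₂ + emb2 D₁ D₂ D₃ (T ε θ₂)) (Sum.inr (Sum.inl i))
        = T ε θ₂ i
      have : θ₂ i = θ (Sum.inr (Sum.inl i)) := rfl
      simp [PiLp.add_apply, PiLp.sub_apply, emb2, LinearMap.coe_toContinuousLinearMap', ← this]
    have hc3 : ∀ ε, par3 D₁ D₂ D₃ (c ε) = par3 D₁ D₂ D₃ θ := by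
      intro ε; ext i
      show (θ - emb2 D₁ D₂ D₃ θ₂ + emb2 D₁ D₂ D₃ (T ε θ₂)) (Sum.inr (Sum.inr i))
        = θ (Sum.inr (Sum.inr i))
      simp [PiLp.add_apply, PiLp.sub_apply, emb2, LinearMap.coe_toContinuousLinearMap']
    have hc0 : c 0 = θ := by
      rw [hcdef]; simp only [hT0 θ₂ hθ₂]; abel
    have hcderiv : HasDerivAt c (emb2 D₁ D₂ D₃ (gradient h θ₂)) 0 :=
      ((emb2 D₁ D₂ D₃).hasFDerivAt.comp_hasDerivAt 0 (hgen θ₂ hθ₂)).const_add _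
    have hconst : (fun ε => L (c ε)) = fun _ => L θ := by
      funext ε
      rw [hL (c ε), hL θ]
      congr 1
      refine Finset.sum_congr rfl fun i _ => ?_
      rw [hc1, hc2, hc3, hTinv ε θ₂ hθ₂]
    have hzero : HasDerivAt (fun ε => L (c ε))
        ((InnerProductSpace.toDual ℝ _) (gradient L θ)
          (emb2 D₁ D₂ D₃ (gradient h θ₂))) 0 := by
      refine HasFDerivAt.comp_hasDerivAt 0 ?_ hcderiv
      rw [hc0]; exact hLgrad
    rw [hconst] at hzero
    have horth : (InnerProductSpace.toDual ℝ _) (gradient L θ)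
        (emb2 D₁ D₂ D₃ (gradient h θ₂)) = 0 :=
      hzero.unique (hasDerivAt_const 0 (L θ))
    -- now compute the derivative of t ↦ h(θ₂(t))
    have hpc : HasDerivAt (fun u => proj2 D₁ D₂ D₃ (θc u))
        (proj2 D₁ D₂ D₃ (-(gradient L θ))) t :=
      (proj2 D₁ D₂ D₃).hasFDerivAt.comp_hasDerivAt t (hflow t ht)
    have hphi : HasDerivAt (fun u => h (par2 D₁ D₂ D₃ (θc u)))
        ((InnerProductSpace.toDual ℝ _) (gradient h θ₂)
          (proj2 D₁ D₂ D₃ (-(gradient L θ)))) t := by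
      have := hgradh.comp_hasDerivAt t hpc
      exact this
    have hval : (InnerProductSpace.toDual ℝ _) (gradient h θ₂)
        (proj2 D₁ D₂ D₃ (-(gradient L θ))) = 0 := by
      rw [InnerProductSpace.toDual_apply_apply, map_neg, inner_neg_right,
        ← emb2_adjoint, real_inner_comm, ← InnerProductSpace.toDual_apply_apply, horth, neg_zero]
    rwa [hval] at hphi
  intro s hs t ht
  have hle : ‖h (par2 D₁ D₂ D₃ (θc s)) - h (par2 D₁ D₂ D₃ (θc t))‖ ≤ 0 * ‖s - t‖ :=
    hI.norm_image_sub_le_of_norm_hasDerivWithin_le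
      (f' := fun _ => (0:ℝ))
      (fun u hu => (key u hu).hasDerivWithinAt)
      (fun u _ => by simp) ht hs
  have : ‖h (par2 D₁ D₂ D₃ (θc s)) - h (par2 D₁ D₂ D₃ (θc t))‖ ≤ 0 := by linarith
  have := le_antisymm this (norm_nonneg _)
  rwa [norm_eq_zero, sub_eq_zero] at this
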